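/- Let s, t ∈ ℤ and define the sequence U : ℕ → ℤ by U_0 = 0, U_1 = 1, and U_{n+2} = s·U_{n+1} + t·U_n. Assume U_n ≠ 0 for all n ≥ 1. Then for all integers 0 ≤ k ≤ n, the product U_k! · U_{n−k}! divides U_n! in ℤ; equivalently, every U-binomial coefficient C_U(n, k) = U_n! / (U_k! · U_{n−k}!) is an integer. -/
import Mathlib


/-- The `U`-factorial over the integers:
`zfact U 0 = 1`, `zfact U n = U n * U (n-1) * ... * U 1`. -/
def zfact (U : ℕ → ℤ) : ℕ → ℤ
  | 0 => 1
  | n + 1 => U (n + 1) * zfact U n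

theorem stmt13 (s t : ℤ) (U : ℕ → ℤ)
    (hU0 : U 0 = 0) (hU1 : U 1 = 1)
    (hUrec : ∀ n, U (n + 2) = s * U (n + 1) + t * U n)
    (hUne : ∀ n, 1 ≤ n → U n ≠ 0) :
    ∀ n k : ℕ, k ≤ n → zfact U k * zfact U (n - k) ∣ zfact U n := by
  have Uadd : ∀ m n, U (m + n + 1) = U (m+1) * U (n+1) + t * U m * U n := by
    intro m
    induction m using Nat.twoStepInduction with
    | zero => intro n; simp [hU0, hU1]
    | one =>
      intro n
      have h2 : U 2 = s := by rw [hUrec 0]; simp [hU0, hU1]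
      rw [show 1 + n + 1 = n + 2 by ring, hUrec n, hU1, h2]; ring
    | more m ih1 ih2 =>
      intro n
      have a1 : U (m + 2 + n + 1) = s * U (m + 1 + n + 1) + t * U (m + n + 1) := by
        have h := hUrec (m + n + 1)
        rw [show m + 2 + n + 1 = m + n + 1 + 2 by ring, h,
          show m + n + 1 + 1 = m + 1 + n + 1 by ring]
      rw [a1, ih2 n, ih1 n, show m + 1 + 1 = m + 2 by ring,
        show m + 2 + 1 = m + 1 + 2 by ring, hUrec (m+1), hUrec m]
      ring
  intro n
  induction n with
  | zero => intro k hk; interval_cases k; simp [zfact]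
  | succ n ih =>
    intro k hk
    rcases Nat.eq_or_lt_of_le hk with rfl | hlt
    · simp [zfact]
    · have hkn : k ≤ n := Nat.lt_succ_iff.mp hlt
      match k with
      | 0 => simpa [zfact] using dvd_refl (zfact U (n+1))
      | j + 1 =>
        obtain ⟨m, rfl⟩ : ∃ m, n = j + 1 + m := ⟨n - (j+1), by omega⟩
        rw [show j + 1 + m + 1 - (j + 1) = m + 1 by omega]
        have key : U (j + 1 + m + 1) = U (j+2) * U (m+1) + t * U (j+1) * U m :=
          Uadd (j+1) m
        obtain ⟨c1, hc1⟩ : zfact U (j+1) * zfact U m ∣ zfact U (j+1+m) := by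
          have := ih (j+1) (by omega)
          rwa [show j + 1 + m - (j + 1) = m by omega] at this
        obtain ⟨c2, hc2⟩ : zfact U j * zfact U (m+1) ∣ zfact U (j+1+m) := by
          have := ih j (by omega)
          rwa [show j + 1 + m - j = m + 1 by omega] at this
        rw [show zfact U (j+1+m+1) = U (j+1+m+1) * zfact U (j+1+m) from rfl,
          key, add_mul]
        apply dvd_add
        · exact ⟨U (j+2) * c1, by rw [mul_assoc, hc1]; simp only [zfact]; ring⟩
        · exact ⟨t * U m * c2, by rw [mul_assoc, hc2]; simp only [zfact]; ring⟩
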